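/- For every linear subspace W ⊆ ℝ^n and every z ∈ W, there exist h ≤ n and vectors g^1, …, g^h ∈ W such that z = g^1 + ⋯ + g^h, each g^k is sign-consistent with z, and the support of each g^k is a circuit of W. -/

import Mathlib

open scoped BigOperators

variable {ι : Type*} [Fintype ι] [DecidableEq ι]

/-- The ℓ₁ norm of a vector. -/
noncomputable def norm1 (x : ι → ℝ) : ℝ := ∑ i, |x i|

/-- The ℓ∞ norm of a vector. -/
noncomputable def normInf (x : ι → ℝ) : ℝ := ⨆ i, |x i|

/-- The ℓ₂ norm of a vector. -/
noncomputable def norm2 (x : ι → ℝ) : ℝ := Real.sqrt (∑ i, (x i) ^ 2)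

/-- The componentwise negative part `max (-x) 0`. -/
noncomputable def vneg (x : ι → ℝ) : ι → ℝ := fun i => max (-(x i)) 0

/-- The componentwise positive part `max x 0`. -/
noncomputable def vpos (x : ι → ℝ) : ι → ℝ := fun i => max (x i) 0

/-- `y` is sign-consistent with `x`. -/
def SignConsistent (y x : ι → ℝ) : Prop :=
  (∀ i, 0 ≤ x i * y i) ∧ ∀ i, x i = 0 → y i = 0

/-- The subspace `ℝ^n_C` of vectors supported on `C`. -/
def coordSubspace (C : Set ι) : Submodule ℝ (ι → ℝ) where
  carrier := {x | ∀ i ∉ C, x i = 0}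
  zero_mem' := by intro i _; rfl
  add_mem' := by intro a b ha hb i hi; simp [ha i hi, hb i hi]
  smul_mem' := by intro c a ha i hi; simp [ha i hi]

/-- `C` is a circuit of the subspace `W`: `W ∩ ℝ^n_C` is one-dimensional and no
strict subset of `C` has this property. -/
def IsCircuit (W : Submodule ℝ (ι → ℝ)) (C : Set ι) : Prop :=
  Module.finrank ℝ ↥(W ⊓ coordSubspace C) = 1 ∧
  ∀ C' : Set ι, C' ⊂ C → Module.finrank ℝ ↥(W ⊓ coordSubspace C') ≠ 1

/-- The circuit imbalance measure `κ_W`. -/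
noncomputable def kappa (W : Submodule ℝ (ι → ℝ)) : ℝ :=
  sSup ({1} ∪ {r | ∃ C : Set ι, IsCircuit W C ∧ ∃ g ∈ W, g ≠ 0 ∧ {i | g i ≠ 0} = C ∧
    r = sSup ((fun i => |g i|) '' C) / sInf ((fun i => |g i|) '' C)})

/-- The matroidal closure of `K` with respect to `W`. -/
def clos (W : Submodule ℝ (ι → ℝ)) (K : Set ι) : Set ι :=
  K ∪ {j | j ∉ K ∧ ∃ C : Set ι, IsCircuit W C ∧ j ∈ C ∧ C ⊆ K ∪ {j}}

/-- `z` is the minimum-norm lift `L_I^W(p)` of `p` to `W`: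
`z ∈ W`, `z` agrees with `p` on `I`, and `z` has minimum ℓ₂-norm among such vectors. -/
def IsMinLift (W : Submodule ℝ (ι → ℝ)) (I : Finset ι) (p z : ι → ℝ) : Prop :=
  z ∈ W ∧ (∀ i ∈ I, z i = p i) ∧
  ∀ z' ∈ W, (∀ i ∈ I, z' i = p i) → norm2 z ≤ norm2 z'

/-- The ℓ₂→ℓ₂ operator norm of the lifting map `L_I^W` on `π_I(W)`. -/
noncomputable def liftOpNorm (W : Submodule ℝ (ι → ℝ)) (I : Finset ι) : ℝ :=
  sSup {r | ∃ p z, IsMinLift W I p z ∧ r = norm2 z / Real.sqrt (∑ i ∈ I, (p i) ^ 2)}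

/-- The condition number `χ̄_W = max{‖L_I^W‖ : ∅ ≠ I}`. -/
noncomputable def chiBar (W : Submodule ℝ (ι → ℝ)) : ℝ :=
  sSup {r | ∃ I : Finset ι, I.Nonempty ∧ r = liftOpNorm W I}

/-- The orthogonal complement of `W` in `ℝ^n`. -/
def orthComp (W : Submodule ℝ (ι → ℝ)) : Submodule ℝ (ι → ℝ) where
  carrier := {y | ∀ x ∈ W, ∑ i, x i * y i = 0}
  zero_mem' := by intro x hx; simp
  add_mem' := by
    intro a b ha hb x hx
    simpa [mul_add, Finset.sum_add_distrib, ha x hx] using hb x hx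
  smul_mem' := by
    intro c a ha x hx
    have h := ha x hx
    have : ∑ i, x i * (c • a) i = c * ∑ i, x i * a i := by
      rw [Finset.mul_sum]
      refine Finset.sum_congr rfl fun i _ => ?_
      simp [Pi.smul_apply, smul_eq_mul]; ring
    simpa [this, h]

/-- `x` is a feasible solution to the primal program of Primal-Dual(W,d,c). -/
def PrimalFeasible (W : Submodule ℝ (ι → ℝ)) (d x : ι → ℝ) : Prop :=
  x - d ∈ W ∧ ∀ i, 0 ≤ x i

/-- `s` is a feasible solution to the dual program of Primal-Dual(W,d,c). -/
def DualFeasible (W : Submodule ℝ (ι → ℝ)) (c s : ι → ℝ) : Prop :=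
  s - c ∈ orthComp W ∧ ∀ i, 0 ≤ s i

/-- `(x,s)` is an optimal solution to Primal-Dual(W,d,c): both feasible and `⟨x,s⟩ = 0`. -/
def IsOptimalPair (W : Submodule ℝ (ι → ℝ)) (d c x s : ι → ℝ) : Prop :=
  PrimalFeasible W d x ∧ DualFeasible W c s ∧ ∑ i, x i * s i = 0

/-- The ℓ₂→ℓ₂ operator norm of a matrix. -/
noncomputable def l2OpNorm {m n : Type*} [Fintype m] [Fintype n] [DecidableEq n]
    (A : Matrix m n ℝ) : ℝ :=
  ‖LinearMap.toContinuousLinearMap (Matrix.toEuclideanLin A)‖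

/-- The max-norm (largest absolute value of an entry) of a matrix. -/
noncomputable def matMaxNorm {m n : Type*} [Fintype m] [Fintype n] (A : Matrix m n ℝ) : ℝ :=
  ⨆ i, ⨆ j, |A i j|

namespace SCCDaux

variable {n : ℕ}

/-- Finset support of a vector. -/
noncomputable def suppF (z : Fin n → ℝ) : Finset (Fin n) :=
  Finset.univ.filter (fun i => z i ≠ 0)

lemma mem_suppF {z : Fin n → ℝ} {i : Fin n} : i ∈ suppF z ↔ z i ≠ 0 := by
  simp [suppF]

lemma coe_suppF (z : Fin n → ℝ) : (↑(suppF z) : Set (Fin n)) = {i | z i ≠ 0} := by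
  ext i; simp [suppF]

lemma sc_trans {y w z : Fin n → ℝ} (h1 : SignConsistent y w) (h2 : SignConsistent w z) :
    SignConsistent y z := by
  refine ⟨fun i => ?_, fun i hi => h1.2 i (h2.2 i hi)⟩
  by_cases hw : w i = 0
  · simp [h1.2 i hw]
  · have hww : 0 < w i * w i := mul_self_pos.mpr hw
    nlinarith [mul_nonneg (h2.1 i) (h1.1 i), h1.1 i, h2.1 i]

lemma suppF_subset_of_sc {y z : Fin n → ℝ} (h : SignConsistent y z) :
    suppF y ⊆ suppF z := by
  intro i hi
  rw [mem_suppF] at hi ⊢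
  exact fun hz => hi (h.2 i hz)

/-- Existence of a nonzero vector of minimal support inside the support of `z`. -/
lemma exists_min_supp (W : Submodule ℝ (Fin n → ℝ)) (z : Fin n → ℝ) (hz : z ∈ W)
    (hz0 : z ≠ 0) :
    ∃ v ∈ W, v ≠ 0 ∧ suppF v ⊆ suppF z ∧ ∀ u ∈ W, u ≠ 0 → ¬ suppF u ⊂ suppF v := by
  set T : Set ℕ := {k | ∃ u, u ∈ W ∧ u ≠ 0 ∧ suppF u ⊆ suppF z ∧ (suppF u).card = k} with hT
  have hTne : T.Nonempty := ⟨(suppF z).card, z, hz, hz0, subset_rfl, rfl⟩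
  obtain ⟨v, hvW, hv0, hvs, hvc⟩ := Nat.sInf_mem hTne
  refine ⟨v, hvW, hv0, hvs, fun u huW hu0 hss => ?_⟩
  have h1 : (suppF u).card ∈ T := ⟨u, huW, hu0, hss.subset.trans hvs, rfl⟩
  have h2 := Nat.sInf_le h1
  have h3 := Finset.card_lt_card hss
  omega

/-- A nonzero vector of (globally) minimal support has circuit support. -/
lemma isCircuit_of_min (W : Submodule ℝ (Fin n → ℝ)) (v : Fin n → ℝ) (hvW : v ∈ W)
    (hv0 : v ≠ 0) (hmin : ∀ u ∈ W, u ≠ 0 → ¬ suppF u ⊂ suppF v) :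
    IsCircuit W {i | v i ≠ 0} := by
  constructor
  · -- one-dimensional
    have hvmem : v ∈ W ⊓ coordSubspace {i | v i ≠ 0} :=
      ⟨hvW, fun i hi => not_not.mp hi⟩
    refine finrank_eq_one (⟨v, hvmem⟩ : ↥(W ⊓ coordSubspace {i | v i ≠ 0})) ?_ ?_
    · intro h
      exact hv0 (congrArg Subtype.val h)
    · rintro ⟨u, huW, huC⟩
      obtain ⟨i₀, hi₀⟩ : ∃ i, v i ≠ 0 := by
        by_contra h; push_neg at h; exact hv0 (funext h)
      refine ⟨u i₀ / v i₀, ?_⟩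
      have key : u - (u i₀ / v i₀) • v = 0 := by
        by_contra hne
        refine hmin _ (Submodule.sub_mem W huW (W.smul_mem _ hvW)) hne ?_
        constructor
        · intro i hi
          rw [mem_suppF] at hi ⊢
          intro hvi
          apply hi
          have hui : u i = 0 := huC i (by simpa using hvi)
          simp [Pi.sub_apply, Pi.smul_apply, smul_eq_mul, hvi, hui]
        · intro hall
          have h0 : i₀ ∈ suppF (u - (u i₀ / v i₀) • v) := hall (mem_suppF.mpr hi₀)
          rw [mem_suppF] at h0
          apply h0
          simp only [Pi.sub_apply, Pi.smul_apply, smul_eq_mul]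
          field_simp
          ring
      apply Subtype.ext
      have : (u i₀ / v i₀) • v = u := by
        have := sub_eq_zero.mp key
        exact this.symm
      simpa using this
  · -- minimality
    intro C' hC'
    have hbot : W ⊓ coordSubspace C' = ⊥ := by
      rw [eq_bot_iff]
      rintro u ⟨huW, huC⟩
      rw [Submodule.mem_bot]
      by_contra hu0
      apply hmin u huW hu0
      rw [← Finset.coe_ssubset, coe_suppF, coe_suppF]
      have hs : {i | u i ≠ 0} ⊆ C' := fun i hi => by
        by_contra hiC; exact hi (huC i hiC)
      exact ssubset_of_subset_of_ssubset hs hC'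
    rw [hbot]
    simp

/-- Existence of a sign-consistent (conformal) circuit vector. -/
lemma exists_conformal_circuit (W : Submodule ℝ (Fin n → ℝ)) :
    ∀ m (z : Fin n → ℝ), z ∈ W → z ≠ 0 → (suppF z).card ≤ m →
      ∃ w ∈ W, w ≠ 0 ∧ SignConsistent w z ∧ IsCircuit W {i | w i ≠ 0} := by
  intro m
  induction m with
  | zero =>
    intro z hz hz0 hcard
    exfalso
    obtain ⟨i, hi⟩ : ∃ i, z i ≠ 0 := by
      by_contra h; push_neg at h; exact hz0 (funext h)
    have : i ∈ suppF z := mem_suppF.mpr hi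
    have := Finset.card_pos.mpr ⟨i, this⟩
    omega
  | succ m IH =>
    intro z hz hz0 hcard
    obtain ⟨v, hvW, hv0, hvs, hmin⟩ := exists_min_supp W z hz hz0
    by_cases hzv : suppF z ⊆ suppF v
    · -- supports equal: z itself has minimal support
      have heq : suppF v = suppF z := subset_antisymm hvs hzv
      refine ⟨z, hz, hz0, ⟨fun i => mul_self_nonneg _, fun i hi => hi⟩, ?_⟩
      exact isCircuit_of_min W z hz hz0 (fun u huW hu0 h => hmin u huW hu0 (heq ▸ h))
    · -- strict inclusion: pivot step
      have hvz : suppF v ⊂ suppF z := ⟨hvs, hzv⟩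
      have hvne : (suppF v).Nonempty := by
        obtain ⟨i, hi⟩ : ∃ i, v i ≠ 0 := by
          by_contra h; push_neg at h; exact hv0 (funext h)
        exact ⟨i, mem_suppF.mpr hi⟩
      obtain ⟨j, hj, hjmin⟩ := Finset.exists_min_image (suppF v) (fun i => |z i / v i|) hvne
      have hvj : v j ≠ 0 := mem_suppF.mp hj
      have hzj : z j ≠ 0 := mem_suppF.mp (hvs hj)
      set t : ℝ := -(z j / v j) with ht
      set z' : Fin n → ℝ := z + t • v with hz'
      have hz'W : z' ∈ W := Submodule.add_mem W hz (W.smul_mem t hvW)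
      have habs : ∀ i ∈ suppF v, |t| * |v i| ≤ |z i| := by
        intro i hi
        have hvi : v i ≠ 0 := mem_suppF.mp hi
        have h1 : |z j / v j| ≤ |z i| / |v i| := by
          rw [← abs_div]; exact hjmin i hi
        have h2 : |t| = |z j / v j| := abs_neg _
        rw [h2]
        exact (le_div_iff₀ (abs_pos.mpr hvi)).mp h1
      have hsc : SignConsistent z' z := by
        constructor
        · intro i
          by_cases hvi : v i = 0
          · have : z' i = z i := by simp [hz', hvi]
            rw [this]; exact mul_self_nonneg _
          · have hi : i ∈ suppF v := mem_suppF.mpr hvi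
            have h2 : |z i * (t * v i)| ≤ |z i| * |z i| := by
              rw [abs_mul, abs_mul]
              exact mul_le_mul_of_nonneg_left (habs i hi) (abs_nonneg _)
            have h3 := neg_abs_le (z i * (t * v i))
            have h4 : |z i| * |z i| = z i * z i := abs_mul_abs_self _
            have : z' i = z i + t * v i := by simp [hz', smul_eq_mul]
            rw [this]
            nlinarith [h2, h3, h4]
        · intro i hi
          have hvi : v i = 0 := by
            by_contra hvi
            exact (mem_suppF.mp (hvs (mem_suppF.mpr hvi))) hi
          simp [hz', hvi, hi]
      have hz'j : z' j = 0 := by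
        simp only [hz', ht, Pi.add_apply, Pi.smul_apply, smul_eq_mul]
        field_simp
        ring
      have hz'0 : z' ≠ 0 := by
        intro h0
        apply hzv
        intro i hi
        rw [mem_suppF] at hi
        rw [mem_suppF]
        intro hvi
        apply hi
        have : z' i = 0 := by rw [h0]; rfl
        have hzi : z i + t * v i = 0 := by simpa [hz', smul_eq_mul] using this
        rw [hvi] at hzi
        linarith
      have hsub : suppF z' ⊂ suppF z := by
        rw [Finset.ssubset_iff_of_subset (suppF_subset_of_sc hsc)]
        exact ⟨j, hvs hj, fun hjz' => (mem_suppF.mp hjz') hz'j⟩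
      have hcard' : (suppF z').card ≤ m := by
        have := Finset.card_lt_card hsub
        omega
      obtain ⟨w, hwW, hw0, hwsc, hwcirc⟩ := IH z' hz'W hz'0 hcard'
      exact ⟨w, hwW, hw0, sc_trans hwsc hsc, hwcirc⟩

/-- Main decomposition, by induction on the support size. -/
lemma main_aux (W : Submodule ℝ (Fin n → ℝ)) :
    ∀ m (z : Fin n → ℝ), z ∈ W → (suppF z).card ≤ m →
      ∃ (h : ℕ) (g : Fin h → (Fin n → ℝ)), h ≤ (suppF z).card ∧ z = ∑ k, g k ∧
        ∀ k, g k ∈ W ∧ SignConsistent (g k) z ∧ IsCircuit W {i | g k i ≠ 0} := by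
  intro m
  induction m with
  | zero =>
    intro z hz hcard
    have hz0 : z = 0 := by
      funext i
      by_contra hi
      have : i ∈ suppF z := mem_suppF.mpr hi
      have := Finset.card_pos.mpr ⟨i, this⟩
      omega
    refine ⟨0, fun k => 0, Nat.zero_le _, ?_, fun k => k.elim0⟩
    simp [hz0]
  | succ m IH =>
    intro z hz hcard
    by_cases hz0 : z = 0
    · refine ⟨0, fun k => 0, Nat.zero_le _, ?_, fun k => k.elim0⟩
      simp [hz0]
    · obtain ⟨w, hwW, hw0, hwsc, hwcirc⟩ :=
        exists_conformal_circuit W (m + 1) z hz hz0 hcard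
      have hws : suppF w ⊆ suppF z := suppF_subset_of_sc hwsc
      have hwne : (suppF w).Nonempty := by
        obtain ⟨i, hi⟩ : ∃ i, w i ≠ 0 := by
          by_contra h; push_neg at h; exact hw0 (funext h)
        exact ⟨i, mem_suppF.mpr hi⟩
      have hpos : ∀ i ∈ suppF w, 0 < z i * w i := by
        intro i hi
        have hwi : w i ≠ 0 := mem_suppF.mp hi
        have hzi : z i ≠ 0 := mem_suppF.mp (hws hi)
        exact lt_of_le_of_ne (hwsc.1 i) (fun h => mul_ne_zero hzi hwi h.symm)
      obtain ⟨j, hj, hjmin⟩ := Finset.exists_min_image (suppF w) (fun i => z i / w i) hwne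
      have hwj : w j ≠ 0 := mem_suppF.mp hj
      set t : ℝ := z j / w j with ht
      have htpos : 0 < t := by
        rcases mul_pos_iff.mp (hpos j hj) with ⟨h1, h2⟩ | ⟨h1, h2⟩
        · exact div_pos h1 h2
        · exact div_pos_of_neg_of_neg h1 h2
      set g₀ : Fin n → ℝ := t • w with hg₀
      set z' : Fin n → ℝ := z - g₀ with hz'
      have hg₀W : g₀ ∈ W := W.smul_mem t hwW
      have hz'W : z' ∈ W := Submodule.sub_mem W hz hg₀W
      have hg₀sc : SignConsistent g₀ z := by
        constructor
        · intro i
          have : g₀ i = t * w i := by simp [hg₀, smul_eq_mul]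
          rw [this]
          by_cases hwi : w i = 0
          · simp [hwi]
          · nlinarith [hpos i (mem_suppF.mpr hwi), htpos]
        · intro i hi
          have hwi : w i = 0 := hwsc.2 i hi
          simp [hg₀, hwi]
      have hg₀supp : {i | g₀ i ≠ 0} = {i | w i ≠ 0} := by
        ext i
        simp only [Set.mem_setOf_eq, hg₀, Pi.smul_apply, smul_eq_mul]
        constructor
        · intro h hw; exact h (by rw [hw]; ring)
        · intro h hc
          rcases mul_eq_zero.mp hc with h' | h'
          · exact absurd h' htpos.ne'
          · exact h h'
      have hsc : SignConsistent z' z := by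
        constructor
        · intro i
          by_cases hwi : w i = 0
          · have : z' i = z i := by simp [hz', hg₀, hwi]
            rw [this]; exact mul_self_nonneg _
          · have hi : i ∈ suppF w := mem_suppF.mpr hwi
            have h7 : t * (z i * w i) ≤ (z i / w i) * (z i * w i) :=
              mul_le_mul_of_nonneg_right (hjmin i hi) (hpos i hi).le
            have h8 : (z i / w i) * (z i * w i) = z i * z i := by
              field_simp
            have : z' i = z i - t * w i := by simp [hz', hg₀, smul_eq_mul]
            rw [this]
            nlinarith [h7, h8]
        · intro i hi
          have hwi : w i = 0 := hwsc.2 i hi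
          simp [hz', hg₀, hwi, hi]
      have hz'j : z' j = 0 := by
        simp only [hz', hg₀, ht, Pi.sub_apply, Pi.smul_apply, smul_eq_mul]
        field_simp
        ring
      have hsub : suppF z' ⊂ suppF z := by
        rw [Finset.ssubset_iff_of_subset (suppF_subset_of_sc hsc)]
        exact ⟨j, hws hj, fun hjz' => (mem_suppF.mp hjz') hz'j⟩
      have hcardlt := Finset.card_lt_card hsub
      have hcard' : (suppF z').card ≤ m := by omega
      obtain ⟨h', g', hh', hsum', hprop'⟩ := IH z' hz'W hcard'
      refine ⟨h' + 1, Fin.cons g₀ g', by omega, ?_, ?_⟩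
      · rw [Fin.sum_cons, ← hsum']
        simp [hz']
      · intro k
        refine Fin.cases ?_ ?_ k
        · rw [Fin.cons_zero]
          exact ⟨hg₀W, hg₀sc, hg₀supp ▸ hwcirc⟩
        · intro k'
          rw [Fin.cons_succ]
          obtain ⟨h1, h2, h3⟩ := hprop' k'
          exact ⟨h1, sc_trans h2 hsc, h3⟩

end SCCDaux

/-- sign-consistent circuit decomposition: every `z ∈ W` can be written
as a sum of at most `n` vectors of `W`, each sign-consistent with `z` and supported
on a circuit of `W`. -/
theorem sign_consistent_circuit_decomposition {n : ℕ}
    (W : Submodule ℝ (Fin n → ℝ)) (z : Fin n → ℝ) (hz : z ∈ W) :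
    ∃ (h : ℕ) (g : Fin h → (Fin n → ℝ)), h ≤ n ∧ z = ∑ k, g k ∧
      ∀ k, g k ∈ W ∧ SignConsistent (g k) z ∧ IsCircuit W {i | g k i ≠ 0} := by
  obtain ⟨h, g, hh, hsum, hprop⟩ :=
    SCCDaux.main_aux W (SCCDaux.suppF z).card z hz le_rfl
  have hn : (SCCDaux.suppF z).card ≤ n := by
    have := Finset.card_filter_le (Finset.univ : Finset (Fin n)) (fun i => z i ≠ 0)
    simpa [SCCDaux.suppF] using this
  exact ⟨h, g, hh.trans hn, hsum, hprop⟩
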